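/- The set of real numbers r > 0 for which there exists an integer n ≥ 2 with f_r(n) = f_r(n+1) is infinite. -/

import Mathlib

/-- The Ruth–Aaron function: for `n = p₁^{a₁} ⋯ p_k^{a_k}`,
`fr r n = ∑ aᵢ · pᵢ^r` (real power); `fr r 1 = 0`. -/
noncomputable def fr (r : ℝ) (n : ℕ) : ℝ :=
  ∑ p ∈ n.primeFactors, (n.factorization p : ℝ) * (p : ℝ) ^ r

open Filter

section FrLemmas

lemma fr_def' (r : ℝ) (n : ℕ) :
    fr r n = n.factorization.sum (fun p e => (e : ℝ) * (p : ℝ) ^ r) := by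
  rw [fr, Finsupp.sum, Nat.support_factorization]

lemma fr_mul (r : ℝ) {a b : ℕ} (ha : a ≠ 0) (hb : b ≠ 0) :
    fr r (a * b) = fr r a + fr r b := by
  rw [fr_def', fr_def', fr_def', Nat.factorization_mul ha hb]
  exact Finsupp.sum_add_index' (by simp) (by intro p e1 e2; push_cast; ring)

lemma fr_prime (r : ℝ) {p : ℕ} (hp : p.Prime) : fr r p = (p : ℝ) ^ r := by
  rw [fr_def', hp.factorization, Finsupp.sum_single_index (by simp), Nat.cast_one, one_mul]

lemma fr_one (r : ℝ) : fr r 1 = 0 := by simp [fr]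

lemma fr_two_pow (r : ℝ) (k : ℕ) : fr r (2 ^ k) = (k : ℝ) * 2 ^ r := by
  induction k with
  | zero => simp [fr_one]
  | succ k ih =>
      rw [pow_succ, fr_mul r (by positivity) (by norm_num), ih,
        fr_prime r Nat.prime_two]
      push_cast; ring

lemma term_nonneg (r : ℝ) (n p : ℕ) : 0 ≤ (n.factorization p : ℝ) * (p : ℝ) ^ r :=
  mul_nonneg (by positivity) (Real.rpow_nonneg (by positivity) r)

lemma fr_ge_rpow {r : ℝ} {n p : ℕ} (hp : p ∈ n.primeFactors) :
    (p : ℝ) ^ r ≤ fr r n := by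
  have hppos : (0:ℝ) < (p:ℝ) :=
    mod_cast (Nat.prime_of_mem_primeFactors hp).pos
  have hpos : 0 < (p:ℝ) ^ r := Real.rpow_pos_of_pos hppos r
  have h1 : 1 ≤ (n.factorization p : ℝ) := by
    have h : n.factorization p ≠ 0 := by
      rw [← Finsupp.mem_support_iff, Nat.support_factorization]; exact hp
    exact_mod_cast Nat.one_le_iff_ne_zero.mpr h
  calc (p:ℝ) ^ r = 1 * (p:ℝ) ^ r := (one_mul _).symm
    _ ≤ (n.factorization p : ℝ) * (p:ℝ) ^ r := mul_le_mul_of_nonneg_right h1 hpos.le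
    _ ≤ fr r n := Finset.single_le_sum (fun q _ => term_nonneg r n q) hp

/-- number of prime factors counted with multiplicity -/
def Om (n : ℕ) : ℕ := ∑ p ∈ n.primeFactors, n.factorization p

lemma fr_ge_card {r : ℝ} (hr : 0 ≤ r) {n c : ℕ} (hc : ∀ p ∈ n.primeFactors, c ≤ p) :
    (Om n : ℝ) * (c : ℝ) ^ r ≤ fr r n := by
  rw [Om]
  push_cast
  rw [Finset.sum_mul]
  apply Finset.sum_le_sum
  intro p hp
  exact mul_le_mul_of_nonneg_left
    (Real.rpow_le_rpow (by positivity) (by exact_mod_cast hc p hp) hr)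
    (by positivity)

lemma fr_zero_eq (n : ℕ) : fr 0 n = (Om n : ℝ) := by
  rw [fr, Om]
  push_cast
  apply Finset.sum_congr rfl
  intro p hp
  rw [Real.rpow_zero, mul_one]

lemma log_eq_sum {n : ℕ} (hn : n ≠ 0) :
    Real.log n = ∑ p ∈ n.primeFactors, (n.factorization p : ℝ) * Real.log p := by
  conv_lhs => rw [← Nat.factorization_prod_pow_eq_self hn]
  rw [Finsupp.prod, Nat.support_factorization]
  push_cast
  rw [Real.log_prod]
  · apply Finset.sum_congr rfl
    intro p hp
    rw [Real.log_pow]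
  · intro p hp
    have := (Nat.prime_of_mem_primeFactors hp).pos
    positivity

lemma fr_cont (n : ℕ) : Continuous fun r => fr r n := by
  apply continuous_finset_sum
  intro p hp
  have hppos : (0:ℝ) < (p:ℝ) := mod_cast (Nat.prime_of_mem_primeFactors hp).pos
  have : (fun r : ℝ => (n.factorization p : ℝ) * (p:ℝ) ^ r)
      = fun r : ℝ => (n.factorization p : ℝ) * Real.exp (Real.log p * r) := by
    funext r
    rw [Real.rpow_def_of_pos hppos]
  rw [this]
  exact continuous_const.mul (Real.continuous_exp.comp (continuous_const.mul continuous_id))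

lemma pow_Om_le {M c : ℕ} (hM : M ≠ 0) (hc : ∀ p ∈ M.primeFactors, c ≤ p) :
    c ^ Om M ≤ M := by
  conv_rhs => rw [← Nat.factorization_prod_pow_eq_self hM]
  rw [Finsupp.prod, Nat.support_factorization, Om, ← Finset.prod_pow_eq_pow_sum]
  exact Finset.prod_le_prod' (fun p hp => Nat.pow_le_pow_left (hc p hp) _)

end FrLemmas

section NumberTheory

lemma kmod6 {k : ℕ} (hk : k.Prime) (h5 : 5 ≤ k) : k % 6 = 1 ∨ k % 6 = 5 := by
  have h2 : k % 2 = 1 := Nat.Prime.eq_two_or_odd hk |>.resolve_left (by omega)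
  have h3 : k % 3 ≠ 0 := by
    intro h
    have : (3:ℕ) ∣ k := Nat.dvd_of_mod_eq_zero h
    have := (Nat.Prime.eq_one_or_self_of_dvd hk 3 this)
    omega
  omega

lemma three_dvd {k : ℕ} (hodd : k % 2 = 1) : 3 ∣ 2 ^ k + 1 := by
  have : ((2 ^ k + 1 : ℕ) : ZMod 3) = 0 := by
    push_cast
    have h2 : (2 : ZMod 3) = -1 := by decide
    rw [h2, Odd.neg_one_pow ⟨k/2, by omega⟩]
    ring
  exact (ZMod.natCast_eq_zero_iff _ _).mp this

lemma nine_not_dvd {k : ℕ} (hk : k.Prime) (h5 : 5 ≤ k) : ¬ (9 ∣ 2 ^ k + 1) := by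
  intro h
  have h0 : ((2 ^ k + 1 : ℕ) : ZMod 9) = 0 := (ZMod.natCast_eq_zero_iff _ _).mpr h
  push_cast at h0
  have hsplit : (2 : ZMod 9) ^ k = 2 ^ (k % 6) := by
    conv_lhs => rw [← Nat.div_add_mod k 6]
    rw [pow_add, pow_mul]
    have h64 : (2:ZMod 9)^6 = 1 := by decide
    rw [h64, one_pow, one_mul]
  rw [hsplit] at h0
  rcases kmod6 hk h5 with h | h <;> rw [h] at h0 <;> revert h0 <;> decide

lemma ord_lemma {k p : ℕ} (hk : k.Prime) (hp : p.Prime)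
    (hpd : p ∣ 2 ^ k + 1) (hp3 : p ≠ 3) : 2 * k + 1 ≤ p := by
  have hk1 : 1 ≤ k := hk.one_lt.le.trans' (by norm_num)
  have hp2 : p ≠ 2 := by
    intro h
    subst h
    have : (2:ℕ) ∣ 2 ^ k := dvd_pow_self 2 (by omega)
    omega
  haveI : Fact p.Prime := ⟨hp⟩
  have hcast : ((2 ^ k + 1 : ℕ) : ZMod p) = 0 := (ZMod.natCast_eq_zero_iff _ _).mpr hpd
  push_cast at hcast
  have h2k : (2 : ZMod p) ^ k = -1 := by linear_combination hcast
  have hno : (-1 : ZMod p) ≠ 1 := by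
    intro h
    have h2 : ((2:ℕ) : ZMod p) = 0 := by push_cast; linear_combination -h
    have := (ZMod.natCast_eq_zero_iff _ _).mp h2
    exact hp2 ((Nat.prime_dvd_prime_iff_eq hp Nat.prime_two).mp this)
  set d := orderOf (2 : ZMod p) with hd
  have hd2k : d ∣ 2 * k := by
    apply orderOf_dvd_of_pow_eq_one
    rw [mul_comm, pow_mul, h2k, neg_one_sq]
  have hdk : ¬ d ∣ k := by
    intro h
    have : (2 : ZMod p) ^ k = 1 := orderOf_dvd_iff_pow_eq_one.mp h
    rw [h2k] at this
    exact hno this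
  have hnot2 : ¬ d ∣ 2 := by
    intro h
    have h4 : (2 : ZMod p) ^ 2 = 1 := orderOf_dvd_iff_pow_eq_one.mp h
    have h3 : ((3:ℕ) : ZMod p) = 0 := by push_cast; linear_combination h4
    have := (ZMod.natCast_eq_zero_iff _ _).mp h3
    exact hp3 ((Nat.prime_dvd_prime_iff_eq hp (by norm_num)).mp this)
  have hdeq : d = 2 * k := by
    have hg : Nat.gcd d k ∣ k := Nat.gcd_dvd_right d k
    rcases hk.eq_one_or_self_of_dvd _ hg with h1 | hkk
    · exact absurd ((Nat.Coprime.dvd_of_dvd_mul_right h1 hd2k)) hnot2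
    · have hkd : k ∣ d := hkk ▸ Nat.gcd_dvd_left d k
      obtain ⟨e, he⟩ := hkd
      have he2 : e ∣ 2 := by
        have : k * e ∣ k * 2 := by rw [← he]; convert hd2k using 1; ring
        exact (mul_dvd_mul_iff_left (by omega : k ≠ 0)).mp this
      have hene : e ≠ 0 := by
        rintro rfl
        simp at he2
      have hle : e ≤ 2 := Nat.le_of_dvd (by norm_num) he2
      have h1e : 1 ≤ e := by omega
      interval_cases e
      · exfalso; apply hdk; rw [he, mul_one]
      · rw [he]; ring
  have h2ne : (2 : ZMod p) ≠ 0 := by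
    intro h
    have h2' : ((2:ℕ) : ZMod p) = 0 := by push_cast; exact h
    have := (ZMod.natCast_eq_zero_iff _ _).mp h2'
    exact hp2 ((Nat.prime_dvd_prime_iff_eq hp Nat.prime_two).mp this)
  have hfer : (2 : ZMod p) ^ (p - 1) = 1 := ZMod.pow_card_sub_one_eq_one h2ne
  have hdp : d ∣ p - 1 := orderOf_dvd_of_pow_eq_one hfer
  rw [hdeq] at hdp
  have hpp : 2 ≤ p := hp.two_le
  have hple : 2 * k ≤ p - 1 := Nat.le_of_dvd (by omega) hdp
  omega

lemma M_struct {k : ℕ} (hk : k.Prime) (h5 : 5 ≤ k) :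
    ∃ M : ℕ, 2 ^ k + 1 = 3 * M ∧ 11 ≤ M ∧ M ≤ 2 ^ k ∧
      (∀ p ∈ M.primeFactors, 2 * k + 1 ≤ p) := by
  have hodd : k % 2 = 1 := by rcases kmod6 hk h5 with h | h <;> omega
  obtain ⟨M, hM⟩ := three_dvd hodd
  refine ⟨M, hM, ?_, ?_, ?_⟩
  · have h32 : 2 ^ 5 ≤ 2 ^ k := Nat.pow_le_pow_right (by norm_num) h5
    omega
  · have : 1 ≤ 2 ^ k := Nat.one_le_two_pow
    omega
  · intro p hp
    have hpp := Nat.prime_of_mem_primeFactors hp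
    have hpd : p ∣ M := Nat.dvd_of_mem_primeFactors hp
    have hpd' : p ∣ 2 ^ k + 1 := hM ▸ Dvd.dvd.mul_left hpd 3
    have hp3 : p ≠ 3 := by
      rintro rfl
      exact nine_not_dvd hk h5 (by
        obtain ⟨t, ht⟩ := hpd
        rw [hM, ht]
        exact ⟨t, by ring⟩)
    exact ord_lemma hk hpp hpd' hp3

end NumberTheory

section Roots

lemma exists_root {k : ℕ} (hk : k.Prime) (h5 : 5 ≤ k) :
    ∃ ρ : ℝ, 0 < ρ ∧ ρ < 1 ∧ fr ρ (2 ^ k) = fr ρ (2 ^ k + 1) := by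
  obtain ⟨M, hM3, hM11, hMle, hMp⟩ := M_struct hk h5
  have hM0 : M ≠ 0 := by omega
  have hfr : ∀ r : ℝ, fr r (2 ^ k + 1) = (3:ℝ) ^ r + fr r M := by
    intro r
    rw [hM3, fr_mul r (by norm_num) hM0, fr_prime r (by norm_num : Nat.Prime 3)]
    norm_num
  set g : ℝ → ℝ := fun r => fr r (2 ^ k) - fr r (2 ^ k + 1) with hg
  have hOm : 3 * Om M ≤ k := by
    have h8 : (8:ℕ) ^ Om M ≤ M := pow_Om_le hM0 (fun p hp => by have := hMp p hp; omega)
    have : (2:ℕ) ^ (3 * Om M) ≤ 2 ^ k := by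
      calc (2:ℕ) ^ (3 * Om M) = 8 ^ Om M := by rw [pow_mul]; norm_num
        _ ≤ M := h8
        _ ≤ 2 ^ k := hMle
    exact (Nat.pow_le_pow_iff_right (by norm_num)).mp this
  have hg0 : 0 < g 0 := by
    have e1 : fr 0 (2 ^ k) = (k : ℝ) := by rw [fr_two_pow, Real.rpow_zero, mul_one]
    have e2 : fr 0 (2 ^ k + 1) = 1 + (Om M : ℝ) := by
      rw [hfr, Real.rpow_zero, fr_zero_eq]
    have hOmR : (Om M : ℝ) ≤ (k : ℝ) / 3 := by
      have : (3 * Om M : ℝ) ≤ (k : ℝ) := by exact_mod_cast hOm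
      linarith
    have hk5 : (5:ℝ) ≤ (k:ℝ) := by exact_mod_cast h5
    simp only [hg, e1, e2]
    linarith
  have hg1 : g 1 < 0 := by
    obtain ⟨p0, hp0⟩ := Nat.nonempty_primeFactors.mpr (show 1 < M by omega)
    have hp0k : (2 * k + 1 : ℝ) ≤ (p0 : ℝ) := by exact_mod_cast hMp p0 hp0
    have hfrM : (2 * k + 1 : ℝ) ≤ fr 1 M := by
      calc (2 * k + 1 : ℝ) ≤ (p0:ℝ) := hp0k
        _ = (p0:ℝ) ^ (1:ℝ) := (Real.rpow_one _).symm
        _ ≤ fr 1 M := fr_ge_rpow hp0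
    have e1 : fr 1 (2 ^ k) = (k : ℝ) * 2 := by rw [fr_two_pow, Real.rpow_one]
    have e2 : fr 1 (2 ^ k + 1) = 3 + fr 1 M := by rw [hfr, Real.rpow_one]
    simp only [hg, e1, e2]
    linarith
  have hc : ContinuousOn g (Set.Icc 0 1) := ((fr_cont _).sub (fr_cont _)).continuousOn
  have hsub := intermediate_value_Ioo' (by norm_num : (0:ℝ) ≤ 1) hc
  have h0mem : (0:ℝ) ∈ Set.Ioo (g 1) (g 0) := ⟨hg1, hg0⟩
  obtain ⟨ρ, hρmem, hρ⟩ := hsub h0mem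
  exact ⟨ρ, hρmem.1, hρmem.2, by linarith [sub_eq_zero.mp hρ]⟩

lemma root_ineq {k : ℕ} (hk : k.Prime) (h5 : 5 ≤ k) {r : ℝ} (hr0 : 0 < r) (hr1 : r < 1)
    (hEq : fr r (2 ^ k) = fr r (2 ^ k + 1)) :
    Real.log 2 ≤ Real.log 3 / (k:ℝ) + (Real.log k / r + Real.log 2) / (k:ℝ) ^ r := by
  obtain ⟨M, hM3, hM11, hMle, hMp⟩ := M_struct hk h5
  have hM0 : M ≠ 0 := by omega
  set x : ℝ := (k:ℝ) with hxdef
  have hx5 : (5:ℝ) ≤ x := by rw [hxdef]; exact_mod_cast h5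
  have hx0 : (0:ℝ) < x := by linarith
  have hlogx : 0 < Real.log x := Real.log_pos (by linarith)
  have hxr : (0:ℝ) < x ^ r := Real.rpow_pos_of_pos hx0 r
  have h2r : (0:ℝ) < (2:ℝ) ^ r := Real.rpow_pos_of_pos (by norm_num) r
  have h3r : (0:ℝ) < (3:ℝ) ^ r := Real.rpow_pos_of_pos (by norm_num) r
  set F : ℝ := fr r M with hF
  have h1 : x * 2 ^ r = 3 ^ r + F := by
    rw [← fr_two_pow r k, hEq, hM3, fr_mul r (by norm_num) hM0,
      fr_prime r (by norm_num : Nat.Prime 3)]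
    norm_num [hF]
  have hF_le : F ≤ x * 2 ^ r := by linarith
  have hΩF : (Om M : ℝ) * ((2 * k + 1 : ℕ) : ℝ) ^ r ≤ F := fr_ge_card hr0.le hMp
  have hmono : (2 * x) ^ r ≤ ((2 * k + 1 : ℕ) : ℝ) ^ r := by
    apply Real.rpow_le_rpow (by positivity) (by push_cast; linarith) hr0.le
  have hΩx : (Om M : ℝ) * x ^ r ≤ x := by
    have e : (2 * x) ^ r = 2 ^ r * x ^ r := Real.mul_rpow (by norm_num) hx0.le
    have h2 : (Om M : ℝ) * (2 ^ r * x ^ r) ≤ x * 2 ^ r := by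
      calc (Om M : ℝ) * (2 ^ r * x ^ r) = (Om M : ℝ) * (2*x) ^ r := by rw [e]
        _ ≤ (Om M : ℝ) * ((2 * k + 1 : ℕ) : ℝ) ^ r :=
            mul_le_mul_of_nonneg_left hmono (by positivity)
        _ ≤ F := hΩF
        _ ≤ x * 2 ^ r := hF_le
    exact le_of_mul_le_mul_right (by linarith [h2] : ((Om M : ℝ) * x ^ r) * 2 ^ r ≤ x * 2 ^ r) h2r
  set B : ℝ := Real.log x / r + Real.log 2 with hBdef
  have hlogp : ∀ p ∈ M.primeFactors, Real.log p ≤ B := by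
    intro p hp
    have hppos : (0:ℝ) < (p:ℝ) := by
      exact_mod_cast (Nat.prime_of_mem_primeFactors hp).pos
    have hpr : (p:ℝ) ^ r ≤ x * 2 ^ r := le_trans (fr_ge_rpow hp) hF_le
    have hlog1 : Real.log ((p:ℝ) ^ r) ≤ Real.log (x * 2 ^ r) :=
      Real.log_le_log (by positivity) hpr
    rw [Real.log_rpow hppos, Real.log_mul hx0.ne' h2r.ne', Real.log_rpow (by norm_num)] at hlog1
    have hc : Real.log x / r * r = Real.log x := div_mul_cancel₀ _ hr0.ne'
    rw [hBdef]
    nlinarith [hlog1, hc, hr0]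
  have hB0 : 0 ≤ B := by
    have h2pos : 0 < Real.log 2 := Real.log_pos (by norm_num)
    have hd : 0 < Real.log x / r := by positivity
    rw [hBdef]; linarith
  have hlogM_le : Real.log M ≤ (Om M : ℝ) * B := by
    rw [log_eq_sum hM0]
    calc ∑ p ∈ M.primeFactors, (M.factorization p : ℝ) * Real.log p
        ≤ ∑ p ∈ M.primeFactors, (M.factorization p : ℝ) * B := by
          apply Finset.sum_le_sum
          intro p hp
          exact mul_le_mul_of_nonneg_left (hlogp p hp) (by positivity)
      _ = (Om M : ℝ) * B := by rw [← Finset.sum_mul, Om]; push_cast; ring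
  have hlogM_ge : x * Real.log 2 - Real.log 3 ≤ Real.log M := by
    have h2k3M : ((2:ℝ)) ^ (k:ℕ) ≤ 3 * (M:ℝ) := by
      have : (2:ℕ) ^ k ≤ 3 * M := by omega
      exact_mod_cast this
    have hlog2 : Real.log ((2:ℝ) ^ (k:ℕ)) ≤ Real.log (3 * (M:ℝ)) :=
      Real.log_le_log (by positivity) h2k3M
    rw [Real.log_pow, Real.log_mul (by norm_num) (by exact_mod_cast hM0)] at hlog2
    linarith
  have hOm_le : (Om M : ℝ) ≤ x / x ^ r := (le_div_iff₀ hxr).mpr hΩx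
  have hchain : x * Real.log 2 - Real.log 3 ≤ (x / x ^ r) * B := by
    calc x * Real.log 2 - Real.log 3 ≤ Real.log M := hlogM_ge
      _ ≤ (Om M : ℝ) * B := hlogM_le
      _ ≤ (x / x ^ r) * B := mul_le_mul_of_nonneg_right hOm_le hB0
  have key : x * Real.log 2 ≤ x * (Real.log 3 / x + B / x ^ r) := by
    have e1 : x * (Real.log 3 / x) = Real.log 3 := by field_simp
    have e2 : x * (B / x ^ r) = (x / x ^ r) * B := by rw [div_mul_eq_mul_div, mul_div_assoc]
    rw [mul_add, e1, e2]
    linarith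
  have := (mul_le_mul_iff_right₀ hx0).mp key
  rwa [hBdef] at this

lemma ev_lemma {r : ℝ} (hr0 : 0 < r) :
    ∀ᶠ k : ℕ in atTop,
      Real.log 3 / (k:ℝ) + (Real.log k / r + Real.log 2) / (k:ℝ) ^ r < Real.log 2 := by
  have hA : Tendsto (fun x : ℝ => Real.log 3 / x) atTop (nhds 0) :=
    tendsto_const_nhds.div_atTop tendsto_id
  have hB : Tendsto (fun x : ℝ => Real.log x / x ^ r) atTop (nhds 0) :=
    (isLittleO_log_rpow_atTop hr0).tendsto_div_nhds_zero
  have hC : Tendsto (fun x : ℝ => Real.log 2 / x ^ r) atTop (nhds 0) :=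
    tendsto_const_nhds.div_atTop (tendsto_rpow_atTop hr0)
  have htot : Tendsto
      (fun x : ℝ => Real.log 3 / x + (Real.log x / r + Real.log 2) / x ^ r) atTop (nhds 0) := by
    have heq : ∀ x : ℝ, Real.log 3 / x + (Real.log x / r + Real.log 2) / x ^ r
        = Real.log 3 / x + ((Real.log x / x ^ r) / r + Real.log 2 / x ^ r) := by
      intro x
      rw [add_div, div_div, div_div, mul_comm r (x ^ r)]
    simp only [heq]
    have := hA.add ((hB.div_const r).add hC)
    simpa using this
  have htotN : Tendsto
      (fun k : ℕ => Real.log 3 / (k:ℝ) + (Real.log k / r + Real.log 2) / (k:ℝ) ^ r)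
      atTop (nhds 0) := htot.comp tendsto_natCast_atTop_atTop
  exact htotN.eventually_lt_const (Real.log_pos (by norm_num))

end Roots

theorem stmt5 :
    {r : ℝ | 0 < r ∧ ∃ n : ℕ, 2 ≤ n ∧ fr r n = fr r (n + 1)}.Infinite := by
  set S := {r : ℝ | 0 < r ∧ ∃ n : ℕ, 2 ≤ n ∧ fr r n = fr r (n + 1)} with hS
  by_contra hinf
  rw [Set.not_infinite] at hinf
  have hfin : S.Finite := hinf
  have key : ∀ ρ : ℝ, ∃ K : ℕ, ∀ k, K ≤ k → k.Prime → 5 ≤ k → 0 < ρ → ρ < 1 →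
      fr ρ (2 ^ k) ≠ fr ρ (2 ^ k + 1) := by
    intro ρ
    by_cases h : 0 < ρ ∧ ρ < 1
    · obtain ⟨K, hK⟩ := eventually_atTop.mp (ev_lemma h.1)
      exact ⟨K, fun k hk hkp hk5 h0 h1 hEq =>
        absurd (root_ineq hkp hk5 h0 h1 hEq) (not_le.mpr (hK k hk))⟩
    · exact ⟨0, fun k _ _ _ h0 h1 => absurd ⟨h0, h1⟩ h⟩
  choose K hK using key
  set T := hfin.toFinset with hT
  set N := T.sup K with hN
  obtain ⟨k, hkN, hkp⟩ := Nat.exists_infinite_primes (max (N + 1) 5)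
  have h5 : 5 ≤ k := le_trans (le_max_right _ _) hkN
  obtain ⟨ρ, h0, h1, hEq⟩ := exists_root hkp h5
  have hρS : ρ ∈ S := by
    refine ⟨h0, 2 ^ k, ?_, hEq⟩
    calc 2 = 2 ^ 1 := (pow_one 2).symm
      _ ≤ 2 ^ k := Nat.pow_le_pow_right (by norm_num) (by omega)
  have hρT : ρ ∈ T := hfin.mem_toFinset.mpr hρS
  have hKN : K ρ ≤ N := Finset.le_sup hρT
  have hNk : K ρ ≤ k := by
    have := le_trans (le_max_left (N+1) 5) hkN
    omega
  exact hK ρ k hNk hkp h5 h0 h1 hEq
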